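/- Let N be the subalgebra of UT_6(F) consisting of matrices of the form with diagonal (a,b,c,c,b,a), nonzero entries only in positions (1,2),(1,3),(1,4),(1,5),(1,6),(2,3),(2,6),(3,6),(4,5),(4,6),(5,6). Then N is closed under the reflection involution θ_6, and its center is Z(N) = F·1 + F·e_{16}, i.e., an element of N is central if and only if it is of the form α·I + β·e_{16}. -/

import Mathlib

open Matrix

/-- The reflection involution `θ_6` on `M_6(F)`. -/
def reflInv {F : Type*} [Field F] (A : Matrix (Fin 6) (Fin 6) F) :
    Matrix (Fin 6) (Fin 6) F :=
  Matrix.of fun i j => A j.rev i.rev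

/-- Membership in the algebra `N ⊆ UT_6(F)`: upper triangular, diagonal
`(a,b,c,c,b,a)` and entries `(2,4),(2,5),(3,4),(3,5)` (1-indexed) equal to zero. -/
def memN {F : Type*} [Field F] (M : Matrix (Fin 6) (Fin 6) F) : Prop :=
  (∀ i j : Fin 6, j < i → M i j = 0) ∧
  M 0 0 = M 5 5 ∧ M 1 1 = M 4 4 ∧ M 2 2 = M 3 3 ∧
  M 1 3 = 0 ∧ M 1 4 = 0 ∧ M 2 3 = 0 ∧ M 2 4 = 0

lemma memN_E01 {F : Type*} [Field F] : memN (single (0:Fin 6) 1 (1:F)) := by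
  refine ⟨fun i j hij => ?_, ?_, ?_, ?_, ?_, ?_, ?_, ?_⟩ <;>
    simp (config := { decide := true }) [single, of_apply]
  rintro rfl rfl; exact absurd hij (by decide)

lemma memN_E12 {F : Type*} [Field F] : memN (single (1:Fin 6) 2 (1:F)) := by
  refine ⟨fun i j hij => ?_, ?_, ?_, ?_, ?_, ?_, ?_, ?_⟩ <;>
    simp (config := { decide := true }) [single, of_apply]
  rintro rfl rfl; exact absurd hij (by decide)

lemma memN_E34 {F : Type*} [Field F] : memN (single (3:Fin 6) 4 (1:F)) := by
  refine ⟨fun i j hij => ?_, ?_, ?_, ?_, ?_, ?_, ?_, ?_⟩ <;>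
    simp (config := { decide := true }) [single, of_apply]
  rintro rfl rfl; exact absurd hij (by decide)

lemma memN_E45 {F : Type*} [Field F] : memN (single (4:Fin 6) 5 (1:F)) := by
  refine ⟨fun i j hij => ?_, ?_, ?_, ?_, ?_, ?_, ?_, ?_⟩ <;>
    simp (config := { decide := true }) [single, of_apply]
  rintro rfl rfl; exact absurd hij (by decide)

lemma memN_E03 {F : Type*} [Field F] : memN (single (0:Fin 6) 3 (1:F)) := by
  refine ⟨fun i j hij => ?_, ?_, ?_, ?_, ?_, ?_, ?_, ?_⟩ <;>
    simp (config := { decide := true }) [single, of_apply]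
  rintro rfl rfl; exact absurd hij (by decide)

lemma memN_E25 {F : Type*} [Field F] : memN (single (2:Fin 6) 5 (1:F)) := by
  refine ⟨fun i j hij => ?_, ?_, ?_, ?_, ?_, ?_, ?_, ?_⟩ <;>
    simp (config := { decide := true }) [single, of_apply]
  rintro rfl rfl; exact absurd hij (by decide)

set_option maxHeartbeats 1000000 in
/-- `N` is closed under `θ_6`, and its center is `F·1 + F·e_{16}`. -/
theorem stmt_9 (F : Type*) [Field F] [CharZero F] :
    (∀ M : Matrix (Fin 6) (Fin 6) F, memN M → memN (reflInv M)) ∧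
    (∀ M : Matrix (Fin 6) (Fin 6) F, memN M →
      ((∀ X : Matrix (Fin 6) (Fin 6) F, memN X → M * X = X * M) ↔
        ∃ a b : F, M = a • (1 : Matrix (Fin 6) (Fin 6) F) +
          b • Matrix.single 0 5 (1 : F))) := by
  constructor
  · rintro M ⟨hl, e1, e2, e3, e4, e5, e6, e7⟩
    exact ⟨fun i j hij => hl _ _ (Fin.rev_lt_rev.mpr hij),
      e1.symm, e2.symm, e3.symm, e7, e5, e6, e4⟩
  · rintro M hM
    constructor
    · intro hcomm
      obtain ⟨hl, e1, e2, e3, e4, e5, e6, e7⟩ := hM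
      have c01 := hcomm _ memN_E01
      have c12 := hcomm _ memN_E12
      have c34 := hcomm _ memN_E34
      have c45 := hcomm _ memN_E45
      have c03 := hcomm _ memN_E03
      have c25 := hcomm _ memN_E25
      -- diagonal equalities
      have d1 := congrFun (congrFun c01 0) 1
      have d2 := congrFun (congrFun c12 1) 2
      have d3 := congrFun (congrFun c34 3) 4
      have d4 := congrFun (congrFun c45 4) 5
      -- vanishing entries
      have z12 := congrFun (congrFun c01 0) 2
      have z15 := congrFun (congrFun c01 0) 5
      have z01 := congrFun (congrFun c12 0) 2
      have z25 := congrFun (congrFun c12 1) 5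
      have z03 := congrFun (congrFun c34 0) 4
      have z45 := congrFun (congrFun c34 3) 5
      have z04 := congrFun (congrFun c45 0) 5
      have z34 := congrFun (congrFun c45 3) 5
      have z35 := congrFun (congrFun c03 0) 5
      have z02 := congrFun (congrFun c25 0) 5
      simp (config := { decide := true }) only [Matrix.mul_apply, Fin.sum_univ_six,
        single, of_apply, if_true, if_false, and_true, true_and, and_false,
        false_and, mul_one, one_mul, mul_zero, zero_mul, add_zero, zero_add,
        ite_true, ite_false] at d1
      simp (config := { decide := true }) only [Matrix.mul_apply, Fin.sum_univ_six,
        single, of_apply, if_true, if_false, and_true, true_and, and_false,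
        false_and, mul_one, one_mul, mul_zero, zero_mul, add_zero, zero_add,
        ite_true, ite_false] at d2 d3 d4
      simp (config := { decide := true }) only [Matrix.mul_apply, Fin.sum_univ_six,
        single, of_apply, if_true, if_false, and_true, true_and, and_false,
        false_and, mul_one, one_mul, mul_zero, zero_mul, add_zero, zero_add,
        ite_true, ite_false] at z12 z15 z01 z25
      simp (config := { decide := true }) only [Matrix.mul_apply, Fin.sum_univ_six,
        single, of_apply, if_true, if_false, and_true, true_and, and_false,
        false_and, mul_one, one_mul, mul_zero, zero_mul, add_zero, zero_add,
        ite_true, ite_false] at z03 z45 z04 z34 z35 z02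
      refine ⟨M 0 0, M 0 5, ?_⟩
      ext i j
      fin_cases i <;> fin_cases j <;>
        simp (config := { decide := true }) [single, one_apply] <;>
        first
          | rfl
          | exact hl _ _ (by decide)
          | assumption
          | (first
              | exact d1.symm
              | exact (d1.trans d2).symm
              | exact (d1.trans (d2.trans e3)).symm
              | exact (d1.trans (d2.trans (e3.trans d3))).symm
              | exact (d1.trans (d2.trans (e3.trans (d3.trans d4)))).symm
              | exact z12.symm
              | exact z15.symm
              | exact z25.symm
              | exact z45.symm
              | exact z35.symm)
    · rintro ⟨a, b, rfl⟩ X hX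
      obtain ⟨hl, e1, e2, e3, e4, e5, e6, e7⟩ := hX
      have key : single (0:Fin 6) 5 (1:F) * X = X * single (0:Fin 6) 5 (1:F) := by
        ext i j
        rw [Matrix.mul_apply, Matrix.mul_apply, Fin.sum_univ_six, Fin.sum_univ_six]
        simp only [single, of_apply]
        simp (config := { decide := true }) only [and_true, true_and, and_false,
          false_and, if_true, if_false, ite_true, ite_false, mul_one, mul_zero,
          zero_mul, one_mul, add_zero, zero_add, show ((5:Fin 6) = 0) = False by simp,
          show ((5:Fin 6) = 1) = False by simp, show ((5:Fin 6) = 2) = False by simp,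
          show ((5:Fin 6) = 3) = False by simp, show ((5:Fin 6) = 4) = False by simp,
          show ((0:Fin 6) = 1) = False by simp, show ((0:Fin 6) = 2) = False by simp,
          show ((0:Fin 6) = 3) = False by simp, show ((0:Fin 6) = 4) = False by simp,
          show ((0:Fin 6) = 5) = False by simp]
        rcases eq_or_ne i 0 with rfl | hi <;> rcases eq_or_ne j 5 with rfl | hj
        · simpa using e1.symm
        · rw [if_pos rfl, if_neg (fun h => hj h.symm)]; simpa using hl 5 j (by omega)
        · rw [if_neg (fun h => hi h.symm), if_pos rfl]; simpa using (hl i 0 (by omega)).symm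
        · rw [if_neg (fun h => hi h.symm), if_neg (fun h => hj h.symm)]; ring
      rw [Matrix.add_mul, Matrix.mul_add, Matrix.smul_mul, Matrix.smul_mul,
        Matrix.mul_smul, Matrix.mul_smul, Matrix.one_mul, Matrix.mul_one, key]
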